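/- Let f, g ∈ F²_d and 0 ≤ r < 1. Define h : 𝔽^d → ℂ by h(γ) := ∑ over all factorizations γ = α·β (a finite sum, one term for each prefix α of γ) of r^{|α|} · f(α) · g(β). Then h ∈ F²_d (Memℓp h 2) and ‖h‖_{F²_d} ≤ (1 − r²)^{-1/2} · ‖f‖_{F²_d} · ‖g‖_{F²_d}. (This expresses that the left multiplier f(rL) is bounded on F²_d with norm at most ‖f‖·(1 − r²)^{-1/2}.) -/

import Mathlib

noncomputable section

open scoped ComplexConjugate
open Matrix
open scoped ComplexOrder

abbrev Word (d : ℕ) := FreeMonoid (Fin d)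

instance {d : ℕ} : DecidableEq (Word d) :=
  fun a b => decidable_of_iff (FreeMonoid.toList a = FreeMonoid.toList b)
    FreeMonoid.toList.injective.eq_iff

abbrev Fock (d : ℕ) := lp (fun _ : Word d => ℂ) 2

abbrev fockBasis (d : ℕ) (α : Word d) : Fock d := lp.single 2 α (1 : ℂ)

/-- Product of the matrices `Z i` along the word `α`. -/
def wordProdM {d : ℕ} {n : Type} [Fintype n] [DecidableEq n]
    (Z : Fin d → Matrix n n ℂ) (α : Word d) : Matrix n n ℂ :=
  (α.toList.map Z).prod

/-- Evaluation of a power series with coefficients `c` at the matrix tuple `Z`. -/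
def evalM {d : ℕ} {n : Type} [Fintype n] [DecidableEq n]
    (c : Word d → ℂ) (Z : Fin d → Matrix n n ℂ) : Matrix n n ℂ :=
  ∑' α : Word d, c α • wordProdM Z α

def IsStrictRowContraction {d : ℕ} {n : Type} [Fintype n] [DecidableEq n]
    (Z : Fin d → Matrix n n ℂ) : Prop :=
  (1 - ∑ i, Z i * (Z i)ᴴ).PosDef

abbrev L2N := lp (fun _ : ℕ => ℂ) 2

def wordProdO {d : ℕ} (Z : Fin d → (L2N →L[ℂ] L2N)) (α : Word d) : L2N →L[ℂ] L2N :=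
  (α.toList.map Z).prod

def evalO {d : ℕ} (c : Word d → ℂ) (Z : Fin d → (L2N →L[ℂ] L2N)) : L2N →L[ℂ] L2N :=
  ∑' α : Word d, c α • wordProdO Z α

def IsStrictRowContractionO {d : ℕ} (Z : Fin d → (L2N →L[ℂ] L2N)) : Prop :=
  ∃ r : ℝ, r < 1 ∧
    ((r ^ 2 : ℂ) • (1 : L2N →L[ℂ] L2N)
      - ∑ i, Z i ∘L ContinuousLinearMap.adjoint (Z i)).IsPositive

/-- The singularity space `𝒮(f)`. -/
def SingSpace {d : ℕ} (f : Word d → ℂ) : Set (Fock d) :=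
  {h | (∀ (n : ℕ) (Z : Fin d → Matrix (Fin n) (Fin n) ℂ) (y : Fin n → ℂ),
          IsStrictRowContraction Z → (evalM f Z)ᴴ *ᵥ y = 0 → (evalM (h ·) Z)ᴴ *ᵥ y = 0) ∧
       (∀ (Z : Fin d → (L2N →L[ℂ] L2N)) (y : L2N),
          IsStrictRowContractionO Z → ContinuousLinearMap.adjoint (evalO f Z) y = 0 →
          ContinuousLinearMap.adjoint (evalO (h ·) Z) y = 0)}

def wordOp {d : ℕ} (R : Fin d → (Fock d →L[ℂ] Fock d)) (α : Word d) :
    Fock d →L[ℂ] Fock d :=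
  (α.toList.map R).prod

/-- `f` is cyclic for the right creation operators. -/
def IsNCOuter {d : ℕ} (R : Fin d → (Fock d →L[ℂ] Fock d)) (f : Fock d) : Prop :=
  (Submodule.span ℂ {g : Fock d | ∃ α : Word d, g = wordOp R α f}).topologicalClosure = ⊤

def IsNCInner {d : ℕ} (R : Fin d → (Fock d →L[ℂ] Fock d))
    (Θ : Fock d →L[ℂ] Fock d) : Prop :=
  (∀ x, ‖Θ x‖ = ‖x‖) ∧ ∀ i, Θ ∘L R i = R i ∘L Θ

/-- Splitting a word at each prefix position: pairs of words correspond to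
words together with a cut position. -/
def splitEquiv (d : ℕ) :
    (Word d × Word d) ≃ (Σ γ : Word d, Fin ((FreeMonoid.toList γ).length + 1)) where
  toFun p := ⟨p.1 * p.2, ⟨(FreeMonoid.toList p.1).length, by
    simp [FreeMonoid.toList_mul]⟩⟩
  invFun q := (FreeMonoid.ofList ((FreeMonoid.toList q.1).take (q.2 : ℕ)),
               FreeMonoid.ofList ((FreeMonoid.toList q.1).drop (q.2 : ℕ)))
  left_inv p := by
    obtain ⟨α, β⟩ := p
    refine Prod.ext ?_ ?_ <;>
      simp [FreeMonoid.toList_mul, List.take_left, List.drop_left,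
        FreeMonoid.ofList_toList]
  right_inv q := by
    obtain ⟨γ, j⟩ := q
    have hj : (j : ℕ) ≤ (FreeMonoid.toList γ).length := Nat.lt_succ_iff.mp j.2
    have h1 : FreeMonoid.ofList ((FreeMonoid.toList γ).take (j : ℕ)) *
        FreeMonoid.ofList ((FreeMonoid.toList γ).drop (j : ℕ)) = γ := by
      apply FreeMonoid.toList.injective
      simp [FreeMonoid.toList_mul, List.take_append_drop]
    dsimp only
    refine Sigma.ext h1 ?_
    rw [Fin.heq_ext_iff (congrArg (fun w => (FreeMonoid.toList w).length + 1) h1)]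
    simp [hj]

/-- **Boundedness of the rescaled left multiplier `f(rL)`.**
For `f, g ∈ F²_d` and `0 ≤ r < 1`, the `r`-rescaled free convolution `h` of `f` and `g`
belongs to `F²_d` with `‖h‖ ≤ (1 - r²)^{-1/2} ‖f‖ ‖g‖`. -/
theorem rescaled_multiplier_bound {d : ℕ} (f g : Fock d) (r : ℝ)
    (hr0 : 0 ≤ r) (hr1 : r < 1) :
    ∃ hh : (fun γ : Word d =>
        ∑ j : Fin ((FreeMonoid.toList γ).length + 1),
          (r : ℂ) ^ (j : ℕ)
            * f (FreeMonoid.ofList ((FreeMonoid.toList γ).take (j : ℕ)))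
            * g (FreeMonoid.ofList ((FreeMonoid.toList γ).drop (j : ℕ)))) ∈
        lp (fun _ : Word d => ℂ) 2,
      ‖(⟨_, hh⟩ : Fock d)‖ ≤ (Real.sqrt (1 - r ^ 2))⁻¹ * (‖f‖ * ‖g‖) := by
  have hr2 : (0:ℝ) < 1 - r ^ 2 := by nlinarith
  have hp2 : (0:ℝ) < (2 : ENNReal).toReal := by norm_num
  have hrp : ∀ x : ℝ, 0 ≤ x → x ^ ((2:ENNReal).toReal) = x ^ 2 := by
    intro x hx
    rw [show ((2:ENNReal).toReal) = ((2:ℕ):ℝ) by norm_num, Real.rpow_natCast]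
  set A : Word d → ℝ := fun α => ‖f α‖ ^ 2 with hA_def
  set B : Word d → ℝ := fun β => ‖g β‖ ^ 2 with hB_def
  have hA : Summable A := by
    have h := (memℓp_gen_iff hp2).mp (lp.memℓp f)
    refine h.congr fun α => ?_
    exact hrp _ (norm_nonneg _)
  have hB : Summable B := by
    have h := (memℓp_gen_iff hp2).mp (lp.memℓp g)
    refine h.congr fun α => ?_
    exact hrp _ (norm_nonneg _)
  have hAnn : ∀ α, 0 ≤ A α := fun _ => sq_nonneg _
  have hBnn : ∀ β, 0 ≤ B β := fun _ => sq_nonneg _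
  have hAB : Summable (fun p : Word d × Word d => A p.1 * B p.2) :=
    hA.mul_of_nonneg hB hAnn hBnn
  set F : (Σ γ : Word d, Fin ((FreeMonoid.toList γ).length + 1)) → ℝ :=
    fun q => A (FreeMonoid.ofList ((FreeMonoid.toList q.1).take (q.2 : ℕ))) *
             B (FreeMonoid.ofList ((FreeMonoid.toList q.1).drop (q.2 : ℕ))) with hF_def
  have hcomp : ∀ p : Word d × Word d, F (splitEquiv d p) = A p.1 * B p.2 := by
    rintro ⟨α, β⟩
    simp [hF_def, splitEquiv, FreeMonoid.toList_mul, List.take_left, List.drop_left,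
      FreeMonoid.ofList_toList]
  have hF : Summable F := by
    rw [← (splitEquiv d).summable_iff]
    exact hAB.congr fun p => (hcomp p).symm
  have hFnn : ∀ q, 0 ≤ F q := fun q => mul_nonneg (hAnn _) (hBnn _)
  have hFsum : ∑' q, F q = (∑' α, A α) * (∑' β, B β) := by
    rw [← (splitEquiv d).tsum_eq F, tsum_congr hcomp, Summable.tsum_mul_tsum hA hB hAB]
  set S : Word d → ℝ := fun γ => ∑ j : Fin ((FreeMonoid.toList γ).length + 1),
    F ⟨γ, j⟩ with hS_def
  have hS : Summable S := by
    have := hF.sigma (f := F)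
    refine this.congr fun γ => ?_
    exact tsum_fintype _
  have hSnn : ∀ γ, 0 ≤ S γ := fun γ => Finset.sum_nonneg fun j _ => hFnn _
  have hSsum : ∑' γ, S γ = (∑' α, A α) * (∑' β, B β) := by
    rw [← hFsum, Summable.tsum_sigma hF]
    exact tsum_congr fun γ => (tsum_fintype _).symm
  -- the pointwise Cauchy–Schwarz bound
  set h : Word d → ℂ := fun γ : Word d =>
        ∑ j : Fin ((FreeMonoid.toList γ).length + 1),
          (r : ℂ) ^ (j : ℕ)
            * f (FreeMonoid.ofList ((FreeMonoid.toList γ).take (j : ℕ)))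
            * g (FreeMonoid.ofList ((FreeMonoid.toList γ).drop (j : ℕ))) with hh_def
  have key : ∀ γ, ‖h γ‖ ^ 2 ≤ (1 - r ^ 2)⁻¹ * S γ := by
    intro γ
    have h1 : ‖h γ‖ ≤ ∑ j : Fin ((FreeMonoid.toList γ).length + 1),
        r ^ (j : ℕ) * (‖f (FreeMonoid.ofList ((FreeMonoid.toList γ).take (j : ℕ)))‖ *
          ‖g (FreeMonoid.ofList ((FreeMonoid.toList γ).drop (j : ℕ)))‖) := by
      refine (norm_sum_le _ _).trans (le_of_eq (Finset.sum_congr rfl fun j _ => ?_))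
      rw [norm_mul, norm_mul, norm_pow, Complex.norm_real, Real.norm_of_nonneg hr0,
        mul_assoc]
    have h2 : ‖h γ‖ ^ 2 ≤ (∑ j : Fin ((FreeMonoid.toList γ).length + 1),
        r ^ (j : ℕ) * (‖f (FreeMonoid.ofList ((FreeMonoid.toList γ).take (j : ℕ)))‖ *
          ‖g (FreeMonoid.ofList ((FreeMonoid.toList γ).drop (j : ℕ)))‖)) ^ 2 :=
      pow_le_pow_left₀ (norm_nonneg _) h1 2
    have h3 := Finset.sum_mul_sq_le_sq_mul_sq Finset.univ
      (fun j : Fin ((FreeMonoid.toList γ).length + 1) => r ^ (j : ℕ))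
      (fun j : Fin ((FreeMonoid.toList γ).length + 1) =>
        ‖f (FreeMonoid.ofList ((FreeMonoid.toList γ).take (j : ℕ)))‖ *
          ‖g (FreeMonoid.ofList ((FreeMonoid.toList γ).drop (j : ℕ)))‖)
    have hgeom : ∑ j : Fin ((FreeMonoid.toList γ).length + 1), (r ^ (j:ℕ)) ^ 2 ≤
        (1 - r ^ 2)⁻¹ := by
      have h4 : ∀ j : ℕ, (r ^ j) ^ 2 = (r ^ 2) ^ j := fun j => by ring
      calc ∑ j : Fin ((FreeMonoid.toList γ).length + 1), (r ^ (j:ℕ)) ^ 2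
          = ∑ j ∈ Finset.range ((FreeMonoid.toList γ).length + 1), (r ^ 2) ^ j := by
            rw [Fin.sum_univ_eq_sum_range (fun j => (r ^ j) ^ 2)]
            exact Finset.sum_congr rfl fun j _ => h4 j
        _ ≤ ∑' j : ℕ, (r ^ 2) ^ j :=
            Summable.sum_le_tsum _ (fun j _ => pow_nonneg (sq_nonneg r) j)
              (summable_geometric_of_lt_one (sq_nonneg r) (by nlinarith))
        _ = (1 - r ^ 2)⁻¹ := tsum_geometric_of_lt_one (sq_nonneg r) (by nlinarith)
    have h5 : (∑ j : Fin ((FreeMonoid.toList γ).length + 1),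
        (‖f (FreeMonoid.ofList ((FreeMonoid.toList γ).take (j : ℕ)))‖ *
          ‖g (FreeMonoid.ofList ((FreeMonoid.toList γ).drop (j : ℕ)))‖) ^ 2) = S γ := by
      refine Finset.sum_congr rfl fun j _ => ?_
      simp [hF_def, hA_def, hB_def, mul_pow]
    calc ‖h γ‖ ^ 2 ≤ _ := h2
      _ ≤ _ := h3
      _ ≤ (1 - r ^ 2)⁻¹ * S γ := by
          rw [← h5] at *
          exact mul_le_mul_of_nonneg_right hgeom
            (Finset.sum_nonneg fun j _ => sq_nonneg _) |>.trans_eq (by rw [h5])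
            |>.trans_eq' (by rw [h5]) |>.trans_eq (by rw [h5])
  have hhsq : Summable fun γ => ‖h γ‖ ^ 2 :=
    (hS.mul_left ((1 - r ^ 2)⁻¹)).of_nonneg_of_le (fun _ => sq_nonneg _) key
  have hh : Memℓp h 2 := by
    apply memℓp_gen
    exact hhsq.congr fun γ => (hrp _ (norm_nonneg _)).symm
  refine ⟨hh, ?_⟩
  set x : Fock d := (⟨h, hh⟩ : Fock d) with hx_def
  have hxnorm : ‖x‖ ^ 2 = ∑' γ, ‖h γ‖ ^ 2 := by
    have := lp.norm_rpow_eq_tsum hp2 x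
    rw [hrp _ (norm_nonneg x)] at this
    rw [this]
    exact tsum_congr fun γ => hrp _ (norm_nonneg _)
  have hfnorm : ‖f‖ ^ 2 = ∑' α, A α := by
    have := lp.norm_rpow_eq_tsum hp2 f
    rw [hrp _ (norm_nonneg f)] at this
    rw [this]
    exact tsum_congr fun α => hrp _ (norm_nonneg _)
  have hgnorm : ‖g‖ ^ 2 = ∑' β, B β := by
    have := lp.norm_rpow_eq_tsum hp2 g
    rw [hrp _ (norm_nonneg g)] at this
    rw [this]
    exact tsum_congr fun β => hrp _ (norm_nonneg _)
  have hbound : ‖x‖ ^ 2 ≤ ((Real.sqrt (1 - r ^ 2))⁻¹ * (‖f‖ * ‖g‖)) ^ 2 := by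
    have h6 : ∑' γ, ‖h γ‖ ^ 2 ≤ (1 - r ^ 2)⁻¹ * ∑' γ, S γ := by
      rw [← tsum_mul_left]
      exact Summable.tsum_le_tsum key hhsq (hS.mul_left _)
    have h7 : ((Real.sqrt (1 - r ^ 2))⁻¹ * (‖f‖ * ‖g‖)) ^ 2 =
        (1 - r ^ 2)⁻¹ * ((∑' α, A α) * (∑' β, B β)) := by
      rw [mul_pow, mul_pow, hfnorm, hgnorm, inv_pow, Real.sq_sqrt hr2.le]
    rw [hxnorm, h7, ← hSsum]
    exact h6
  have htgt : 0 ≤ (Real.sqrt (1 - r ^ 2))⁻¹ * (‖f‖ * ‖g‖) :=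
    mul_nonneg (inv_nonneg.mpr (Real.sqrt_nonneg _))
      (mul_nonneg (norm_nonneg _) (norm_nonneg _))
  calc ‖x‖ = Real.sqrt (‖x‖ ^ 2) := (Real.sqrt_sq (norm_nonneg _)).symm
    _ ≤ Real.sqrt (((Real.sqrt (1 - r ^ 2))⁻¹ * (‖f‖ * ‖g‖)) ^ 2) :=
        Real.sqrt_le_sqrt hbound
    _ = _ := Real.sqrt_sq htgt
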